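/- Let X be an independent set of G with d(X) > 0 such that every proper subset Y ⊊ X satisfies d(Y) < d(X). Define a bipartite graph H_X with vertex set X ∪ N(X) ∪ {v, w} (v, w two new vertices), and edge set consisting of the edges of G between X and N(X), the edge vw, and all edges vx for x ∈ N(X). Then the only maximum independent sets of H_X are X ∪ {v} and X ∪ {w}; in particular core(H_X) = X. -/

import Mathlib

open Classical Finset

/-- Neighborhood of a set of vertices: all vertices adjacent to some vertex of `X`. -/
noncomputable def nbhd {V : Type*} (G : SimpleGraph V) [Fintype V] (X : Finset V) : Finset V :=
  Finset.univ.filter (fun v => ∃ x ∈ X, G.Adj x v)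

/-- The difference `d(X) = |X| - |N(X)|`. -/
noncomputable def gdiff {V : Type*} (G : SimpleGraph V) [Fintype V] (X : Finset V) : ℤ :=
  (X.card : ℤ) - ((nbhd G X).card : ℤ)

/-- `X` is an independent set of `G`. -/
def IsIndep {V : Type*} (G : SimpleGraph V) (X : Finset V) : Prop :=
  ∀ x ∈ X, ∀ y ∈ X, ¬ G.Adj x y

/-- The critical difference `d_c(G) = max { d(X) : X ⊆ V(G) }`. -/
noncomputable def critDiff {V : Type*} (G : SimpleGraph V) [Fintype V] : ℤ :=
  Finset.univ.powerset.sup' ⟨∅, Finset.empty_mem_powerset _⟩ (gdiff G)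

/-- `X` is a critical set of `G`. -/
noncomputable def IsCritical {V : Type*} (G : SimpleGraph V) [Fintype V] (X : Finset V) : Prop :=
  gdiff G X = critDiff G

/-- `ker G` : the intersection of all critical sets of `G`. -/
noncomputable def kerG {V : Type*} (G : SimpleGraph V) [Fintype V] : Finset V :=
  Finset.univ.filter (fun v => ∀ X : Finset V, IsCritical G X → v ∈ X)

/-- `diadem G` : the union of all critical independent sets of `G`. -/
noncomputable def diademG {V : Type*} (G : SimpleGraph V) [Fintype V] : Finset V :=
  Finset.univ.filter (fun v => ∃ X : Finset V, IsCritical G X ∧ IsIndep G X ∧ v ∈ X)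

/-- The independence number `α(G)`. -/
noncomputable def alphaG {V : Type*} (G : SimpleGraph V) [Fintype V] : ℕ :=
  (Finset.univ.powerset.filter (IsIndep G)).sup Finset.card

/-- `core G` : the intersection of all maximum independent sets of `G`. -/
noncomputable def coreG {V : Type*} (G : SimpleGraph V) [Fintype V] : Finset V :=
  Finset.univ.filter (fun v => ∀ I : Finset V, IsIndep G I → I.card = alphaG G → v ∈ I)

/-- `M` is a matching of `G`, given as a finite set of pairwise disjoint edges of `G`. -/
def IsMatchingF {V : Type*} (G : SimpleGraph V) (M : Finset (Sym2 V)) : Prop :=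
  (↑M : Set (Sym2 V)) ⊆ G.edgeSet ∧
    ∀ e₁ ∈ M, ∀ e₂ ∈ M, e₁ ≠ e₂ → ∀ v : V, v ∈ e₁ → v ∉ e₂

/-- The matching number `μ(G)`. -/
noncomputable def matchNum {V : Type*} (G : SimpleGraph V) [Fintype V] : ℕ :=
  ((Finset.univ : Finset (Finset (Sym2 V))).filter (IsMatchingF G)).sup Finset.card

/-- There is a matching from `A` into `B`: an injection of `A` into `B` along edges of `G`. -/
def MatchingFromInto {V : Type*} (G : SimpleGraph V) (A B : Finset V) : Prop :=
  ∃ f : V → V, Set.InjOn f ↑A ∧ ∀ a ∈ A, f a ∈ B ∧ G.Adj a (f a)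

/-- The auxiliary bipartite graph `H_X` on vertex set `X ∪ N(X) ∪ {v, w}`, where
`v = Sum.inr false` and `w = Sum.inr true`.  Its edges are the edges of `G` between
`X` and `N(X)`, the edge `vw`, and all edges from `v` to `N(X)`. -/
noncomputable def HX {V : Type*} (G : SimpleGraph V) [Fintype V] (X : Finset V) :
    SimpleGraph ({a : V // a ∈ X ∪ nbhd G X} ⊕ Bool) :=
  SimpleGraph.fromRel (fun p q =>
    match p, q with
    | Sum.inl a, Sum.inl b => a.1 ∈ X ∧ b.1 ∈ nbhd G X ∧ G.Adj a.1 b.1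
    | Sum.inr false, Sum.inr true => True
    | Sum.inr false, Sum.inl b => b.1 ∈ nbhd G X
    | _, _ => False)

/-- The copy of `X` inside the vertex set of `H_X`. -/
noncomputable def Xlift {V : Type*} (G : SimpleGraph V) [Fintype V] (X : Finset V) :
    Finset ({a : V // a ∈ X ∪ nbhd G X} ⊕ Bool) :=
  Finset.univ.filter (fun p => ∃ a : {a : V // a ∈ X ∪ nbhd G X}, p = Sum.inl a ∧ a.1 ∈ X)

/-- Edmonds–Gallai set `D`: vertices missed by some maximum matching. -/
noncomputable def gallaiD {V : Type*} (G : SimpleGraph V) [Fintype V] : Finset V :=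
  Finset.univ.filter (fun v => ∃ M : Finset (Sym2 V),
    IsMatchingF G M ∧ M.card = matchNum G ∧ ∀ e ∈ M, v ∉ e)

/-- Edmonds–Gallai set `A = N(D) - D`. -/
noncomputable def gallaiA {V : Type*} (G : SimpleGraph V) [Fintype V] : Finset V :=
  nbhd G (gallaiD G) \ gallaiD G

/-- Edmonds–Gallai set `C = V - A - D`. -/
noncomputable def gallaiC {V : Type*} (G : SimpleGraph V) [Fintype V] : Finset V :=
  (Finset.univ \ gallaiD G) \ gallaiA G

/-- The vertices of the singleton components of `G[D]`. -/
noncomputable def singlesD {V : Type*} (G : SimpleGraph V) [Fintype V] : Finset V :=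
  (gallaiD G).filter (fun v => ∀ w ∈ gallaiD G, ¬ G.Adj v w)

section Stmt4Aux

variable {V : Type*} (G : SimpleGraph V) [Fintype V] (X : Finset V)

lemma mem_nbhd' {v : V} : v ∈ nbhd G X ↔ ∃ x ∈ X, G.Adj x v := by
  simp [nbhd]

lemma nbhd_mono' {A B : Finset V} (h : A ⊆ B) : nbhd G A ⊆ nbhd G B := by
  intro v hv
  rw [mem_nbhd'] at hv ⊢
  obtain ⟨x, hx, ha⟩ := hv
  exact ⟨x, h hx, ha⟩

lemma indep_disj (hind : IsIndep G X) {a : V} (ha : a ∈ X) : a ∉ nbhd G X := by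
  rw [mem_nbhd']
  rintro ⟨x, hx, hadj⟩
  exact hind x hx a ha hadj

/-- The underlying relation of `HX`. -/
def hxRel (p q : {a : V // a ∈ X ∪ nbhd G X} ⊕ Bool) : Prop :=
  match p, q with
  | Sum.inl a, Sum.inl b => a.1 ∈ X ∧ b.1 ∈ nbhd G X ∧ G.Adj a.1 b.1
  | Sum.inr false, Sum.inr true => True
  | Sum.inr false, Sum.inl b => b.1 ∈ nbhd G X
  | _, _ => False

lemma hx_adj (p q : {a : V // a ∈ X ∪ nbhd G X} ⊕ Bool) :
    (HX G X).Adj p q ↔ p ≠ q ∧ (hxRel G X p q ∨ hxRel G X q p) :=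
  SimpleGraph.fromRel_adj _ p q

lemma mem_Xlift_inl (a : {a : V // a ∈ X ∪ nbhd G X}) :
    Sum.inl a ∈ Xlift G X ↔ a.1 ∈ X := by
  simp only [Xlift, mem_filter, mem_univ, true_and]
  constructor
  · rintro ⟨a', h1, h2⟩
    cases Sum.inl_injective h1; exact h2
  · intro h; exact ⟨a, rfl, h⟩

lemma not_mem_Xlift_inr (b : Bool) : Sum.inr b ∉ Xlift G X := by
  simp [Xlift]

lemma card_Xlift : (Xlift G X).card = X.card := by
  refine (Finset.card_bij (fun a ha => (Sum.inl ⟨a, Finset.mem_union_left _ ha⟩ :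
      {a : V // a ∈ X ∪ nbhd G X} ⊕ Bool)) ?_ ?_ ?_).symm
  · intro a ha
    rw [mem_Xlift_inl]; exact ha
  · intro a₁ h₁ a₂ h₂ h
    simpa using h
  · rintro p hp
    simp only [Xlift, mem_filter, mem_univ, true_and] at hp
    obtain ⟨a, rfl, haX⟩ := hp
    exact ⟨a.1, haX, by simp⟩

lemma indep_Xlift_union (hind : IsIndep G X) (b : Bool) :
    IsIndep (HX G X) (Xlift G X ∪ {Sum.inr b}) := by
  intro p hp q hq hadj
  rw [hx_adj] at hadj
  obtain ⟨hne, hrel⟩ := hadj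
  simp only [Finset.mem_union, Finset.mem_singleton] at hp hq
  have hXl : ∀ r, r ∈ Xlift G X → ∃ a, r = Sum.inl a ∧ a.1 ∈ X := by
    intro r hr
    simpa [Xlift] using hr
  rcases hp with hp | rfl <;> rcases hq with hq | rfl
  · obtain ⟨a, rfl, haX⟩ := hXl _ hp
    obtain ⟨c, rfl, hcX⟩ := hXl _ hq
    rcases hrel with ⟨_, hc, _⟩ | ⟨_, hc, _⟩
    · exact indep_disj G X hind hcX hc
    · exact indep_disj G X hind haX hc
  · obtain ⟨a, rfl, haX⟩ := hXl _ hp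
    cases b <;> rcases hrel with h | h <;> first
      | exact h
      | exact indep_disj G X hind haX h
  · obtain ⟨c, rfl, hcX⟩ := hXl _ hq
    cases b <;> rcases hrel with h | h <;> first
      | exact h
      | exact indep_disj G X hind hcX h
  · exact hne rfl

end Stmt4Aux

section Stmt4Key

variable {V : Type*} (G : SimpleGraph V) [Fintype V] (X : Finset V)

lemma key_bound (hind : IsIndep G X)
    (hmin : ∀ Y ⊂ X, gdiff G Y < gdiff G X)
    (I : Finset ({a : V // a ∈ X ∪ nbhd G X} ⊕ Bool))
    (hI : IsIndep (HX G X) I) :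
    I.card ≤ X.card + 1 ∧
      (I.card = X.card + 1 →
        I = Xlift G X ∪ {Sum.inr false} ∨ I = Xlift G X ∪ {Sum.inr true}) := by
  classical
  set A : Finset V := X.filter (fun a => ∃ h : a ∈ X ∪ nbhd G X, Sum.inl ⟨a, h⟩ ∈ I) with hA
  set B : Finset V := (nbhd G X).filter
      (fun a => ∃ h : a ∈ X ∪ nbhd G X, Sum.inl ⟨a, h⟩ ∈ I) with hB
  set IA := I.filter (fun p => ∃ a, p = Sum.inl a ∧ a.1 ∈ X) with hIA
  set IB := I.filter (fun p => ∃ a, p = Sum.inl a ∧ a.1 ∈ nbhd G X) with hIB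
  set IS := I.filter (fun p => ∃ b, p = Sum.inr b) with hIS
  have hpart : I = IA ∪ IB ∪ IS := by
    ext p
    simp only [hIA, hIB, hIS, Finset.mem_union, mem_filter]
    constructor
    · intro hp
      rcases p with a | b
      · rcases Finset.mem_union.mp a.2 with h | h
        · exact Or.inl (Or.inl ⟨hp, a, rfl, h⟩)
        · exact Or.inl (Or.inr ⟨hp, a, rfl, h⟩)
      · exact Or.inr ⟨hp, b, rfl⟩
    · rintro ((⟨h, _⟩ | ⟨h, _⟩) | ⟨h, _⟩) <;> exact h
  have hd1 : Disjoint IA IB := by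
    rw [Finset.disjoint_left]
    rintro p hp hq
    simp only [hIA, hIB, mem_filter] at hp hq
    obtain ⟨-, a, rfl, haX⟩ := hp
    obtain ⟨-, a', ha', haN⟩ := hq
    cases Sum.inl_injective ha'
    exact indep_disj G X hind haX haN
  have hd2 : Disjoint (IA ∪ IB) IS := by
    rw [Finset.disjoint_left]
    rintro p hp hq
    simp only [hIA, hIB, hIS, Finset.mem_union, mem_filter] at hp hq
    obtain ⟨-, b, rfl⟩ := hq
    rcases hp with ⟨-, a, h, -⟩ | ⟨-, a, h, -⟩ <;> exact Sum.inr_ne_inl h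
  have hcard : I.card = IA.card + IB.card + IS.card := by
    rw [hpart, Finset.card_union_of_disjoint hd2, Finset.card_union_of_disjoint hd1]
  have hAcard : A.card = IA.card := by
    refine Finset.card_bij (fun a ha => (Sum.inl ⟨a, Finset.mem_union_left _
        (Finset.mem_of_mem_filter a ha)⟩ : {a : V // a ∈ X ∪ nbhd G X} ⊕ Bool)) ?_ ?_ ?_
    · intro a ha
      simp only [hA, mem_filter] at ha
      obtain ⟨haX, h, hmem⟩ := ha
      simp only [hIA, mem_filter]
      exact ⟨hmem, _, rfl, haX⟩
    · intro a₁ h₁ a₂ h₂ h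
      simpa using h
    · rintro p hp
      simp only [hIA, mem_filter] at hp
      obtain ⟨hpI, a, rfl, haX⟩ := hp
      refine ⟨a.1, ?_, by simp⟩
      simp only [hA, mem_filter]
      exact ⟨haX, a.2, hpI⟩
  have hBcard : B.card = IB.card := by
    refine Finset.card_bij (fun a ha => (Sum.inl ⟨a, Finset.mem_union_right _
        (Finset.mem_of_mem_filter a ha)⟩ : {a : V // a ∈ X ∪ nbhd G X} ⊕ Bool)) ?_ ?_ ?_
    · intro a ha
      simp only [hB, mem_filter] at ha
      obtain ⟨haN, h, hmem⟩ := ha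
      simp only [hIB, mem_filter]
      exact ⟨hmem, _, rfl, haN⟩
    · intro a₁ h₁ a₂ h₂ h
      simpa using h
    · rintro p hp
      simp only [hIB, mem_filter] at hp
      obtain ⟨hpI, a, rfl, haN⟩ := hp
      refine ⟨a.1, ?_, by simp⟩
      simp only [hB, mem_filter]
      exact ⟨haN, a.2, hpI⟩
  have hAsub : A ⊆ X := Finset.filter_subset _ _
  have hNA : nbhd G A ⊆ nbhd G X := nbhd_mono' G (by exact hAsub)
  have hBsub : B ⊆ nbhd G X \ nbhd G A := by
    intro b hb
    simp only [hB, mem_filter] at hb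
    obtain ⟨hbN, hb', hbI⟩ := hb
    rw [Finset.mem_sdiff]
    refine ⟨hbN, ?_⟩
    rw [mem_nbhd']
    rintro ⟨a, haA, hadj⟩
    simp only [hA, mem_filter] at haA
    obtain ⟨haX, ha', haI⟩ := haA
    have hne : (Sum.inl ⟨a, ha'⟩ : {a : V // a ∈ X ∪ nbhd G X} ⊕ Bool) ≠ Sum.inl ⟨b, hb'⟩ := by
      intro h
      have : a = b := by simpa using h
      exact indep_disj G X hind haX (this ▸ hbN)
    exact hI _ haI _ hbI ((hx_adj G X _ _).mpr ⟨hne, Or.inl ⟨haX, hbN, hadj⟩⟩)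
  have hBle : (B.card : ℤ) ≤ (nbhd G X).card - (nbhd G A).card := by
    have h1 := Finset.card_le_card hBsub
    rw [Finset.card_sdiff_of_subset hNA] at h1
    have h2 := Finset.card_le_card hNA
    omega
  have hAd : gdiff G A ≤ gdiff G X := by
    rcases eq_or_ne A X with h | h
    · rw [h]
    · exact le_of_lt (hmin A (hAsub.ssubset_of_ne h))
  have hAB : (A.card : ℤ) + B.card ≤ X.card := by
    simp only [gdiff] at hAd
    omega
  have hISle : IS.card ≤ 1 := by
    rw [Finset.card_le_one]
    intro p hp q hq
    simp only [hIS, mem_filter] at hp hq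
    obtain ⟨hpI, b₁, rfl⟩ := hp
    obtain ⟨hqI, b₂, rfl⟩ := hq
    by_contra hne
    have hadj : (HX G X).Adj (Sum.inr b₁) (Sum.inr b₂) ∨
        (HX G X).Adj (Sum.inr b₂) (Sum.inr b₁) := by
      have hb : b₁ ≠ b₂ := fun h => hne (by rw [h])
      rcases b₁ with _|_ <;> rcases b₂ with _|_
      · exact absurd rfl hb
      · exact Or.inl ((hx_adj G X _ _).mpr ⟨by simp, Or.inl trivial⟩)
      · exact Or.inr ((hx_adj G X _ _).mpr ⟨by simp, Or.inl trivial⟩)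
      · exact absurd rfl hb
    rcases hadj with h | h
    · exact hI _ hpI _ hqI h
    · exact hI _ hqI _ hpI h
  have hbound : I.card ≤ X.card + 1 := by omega
  refine ⟨hbound, ?_⟩
  intro heq
  have hABeq : A.card + B.card = X.card ∧ IS.card = 1 := by omega
  have hAdge : gdiff G X ≤ gdiff G A := by
    simp only [gdiff]
    omega
  have hAX : A = X := by
    by_contra h
    exact absurd (hmin A (hAsub.ssubset_of_ne h)) (not_lt.mpr hAdge)
  have hBz : B.card = 0 := by
    have : A.card = X.card := by rw [hAX]
    omega
  have hIAX : IA = Xlift G X := by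
    apply Finset.eq_of_subset_of_card_le
    · intro p hp
      simp only [hIA, mem_filter] at hp
      obtain ⟨-, a, rfl, haX⟩ := hp
      exact (mem_Xlift_inl G X a).mpr haX
    · rw [card_Xlift, ← hAcard, hAX]
  obtain ⟨p, hps⟩ := Finset.card_eq_one.mp hABeq.2
  have hpmem : p ∈ IS := hps ▸ Finset.mem_singleton_self p
  simp only [hIS, mem_filter] at hpmem
  obtain ⟨-, b, rfl⟩ := hpmem
  have hIBe : IB = ∅ := Finset.card_eq_zero.mp (by omega)
  have : I = Xlift G X ∪ {Sum.inr b} := by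
    rw [hpart, hIAX, hIBe, hps]
    simp
  rcases b with _|_
  · exact Or.inl this
  · exact Or.inr this

end Stmt4Key

section Stmt4Main

variable {V : Type*} (G : SimpleGraph V) [Fintype V] (X : Finset V)

lemma card_Xlift_union (b : Bool) :
    (Xlift G X ∪ {Sum.inr b}).card = X.card + 1 := by
  rw [Finset.card_union_of_disjoint (by simp [Finset.disjoint_singleton_right,
    not_mem_Xlift_inr]), card_Xlift, Finset.card_singleton]

lemma alpha_HX (hind : IsIndep G X)
    (hmin : ∀ Y ⊂ X, gdiff G Y < gdiff G X) :
    alphaG (HX G X) = X.card + 1 := by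
  apply le_antisymm
  · apply Finset.sup_le
    intro J hJ
    rw [Finset.mem_filter] at hJ
    exact (key_bound G X hind hmin J hJ.2).1
  · have hmem : Xlift G X ∪ {Sum.inr false} ∈
        Finset.univ.powerset.filter (IsIndep (HX G X)) := by
      rw [Finset.mem_filter]
      exact ⟨Finset.mem_powerset.mpr (Finset.subset_univ _), indep_Xlift_union G X hind false⟩
    have := Finset.le_sup (f := Finset.card) hmem
    rwa [card_Xlift_union] at this

end Stmt4Main

/-- the only maximum independent sets of `H_X` are `X ∪ {v}` and `X ∪ {w}`;
in particular `core (H_X) = X`. -/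
theorem stmt4 {V : Type*} (G : SimpleGraph V) [Fintype V] [DecidableRel G.Adj]
    (X : Finset V) (hind : IsIndep G X) (hpos : 0 < gdiff G X)
    (hmin : ∀ Y ⊂ X, gdiff G Y < gdiff G X) :
    (∀ I : Finset ({a : V // a ∈ X ∪ nbhd G X} ⊕ Bool),
        (IsIndep (HX G X) I ∧ I.card = alphaG (HX G X)) ↔
          (I = Xlift G X ∪ {Sum.inr false} ∨ I = Xlift G X ∪ {Sum.inr true})) ∧
    coreG (HX G X) = Xlift G X := by
  have halpha := alpha_HX G X hind hmin
  have hiff : ∀ I : Finset ({a : V // a ∈ X ∪ nbhd G X} ⊕ Bool),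
      (IsIndep (HX G X) I ∧ I.card = alphaG (HX G X)) ↔
        (I = Xlift G X ∪ {Sum.inr false} ∨ I = Xlift G X ∪ {Sum.inr true}) := by
    intro I
    constructor
    · rintro ⟨hI, hc⟩
      exact (key_bound G X hind hmin I hI).2 (by omega)
    · rintro (rfl | rfl)
      · exact ⟨indep_Xlift_union G X hind false, by rw [card_Xlift_union, halpha]⟩
      · exact ⟨indep_Xlift_union G X hind true, by rw [card_Xlift_union, halpha]⟩
  refine ⟨hiff, ?_⟩
  ext p
  simp only [coreG, Finset.mem_filter, Finset.mem_univ, true_and]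
  constructor
  · intro h
    have h1 := h _ (indep_Xlift_union G X hind false) (by rw [card_Xlift_union, halpha])
    have h2 := h _ (indep_Xlift_union G X hind true) (by rw [card_Xlift_union, halpha])
    rw [Finset.mem_union, Finset.mem_singleton] at h1 h2
    rcases h1 with h1 | rfl
    · exact h1
    · rcases h2 with h2 | h2
      · exact h2
      · exact absurd h2 (by simp)
  · intro hp I hI hc
    rcases (hiff I).mp ⟨hI, hc⟩ with rfl | rfl <;>
      exact Finset.mem_union_left _ hp
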